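/- Let E be a rearrangement-invariant quasi-Banach function space on (0,∞) with lower Boyd index p_E, and let 0 < U < p_E and 0 < W ≤ ∞. Then there exist constants c, C > 0 such that for all measurable f on (0,∞): c ρ_E(f^*) ≤ ρ_E(H^{(U,W)}f) ≤ C ρ_E(f^*); in particular ‖f‖_E and ρ_E(H^{(U,W)}f) are equivalent. -/

import Mathlib

open MeasureTheory Set Filter
open scoped ENNReal NNReal

noncomputable section

/-- The non-increasing rearrangement of a function on `(0, ∞)` (with Lebesgue measure):
`f^*(t) = inf {λ : |{s > 0 : |f(s)| > λ}| ≤ t}`. -/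
def rearr (f : ℝ → ℝ) (t : ℝ) : ℝ≥0∞ :=
  sInf {lam : ℝ≥0∞ |
    volume {s : ℝ | 0 < s ∧ lam < ENNReal.ofReal |f s|} ≤ ENNReal.ofReal t}

/-- A rearrangement-invariant quasi-Banach function space on `(0,∞)`, given by the
functional `ρ` on (extended-)nonnegative measurable functions on `(0,∞)`. -/
structure RIQBFS where
  ρ : (ℝ → ℝ≥0∞) → ℝ≥0∞
  C : ℝ
  one_le_C : 1 ≤ C
  eq_zero_iff : ∀ f : ℝ → ℝ≥0∞, ρ f = 0 ↔ f =ᵐ[volume.restrict (Set.Ioi (0 : ℝ))] 0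
  smul_eq : ∀ (c : ℝ≥0) (f : ℝ → ℝ≥0∞), ρ (fun t => (c : ℝ≥0∞) * f t) = (c : ℝ≥0∞) * ρ f
  quasi_triangle : ∀ f g : ℝ → ℝ≥0∞, ρ (fun t => f t + g t) ≤ ENNReal.ofReal C * (ρ f + ρ g)
  mono : ∀ f g : ℝ → ℝ≥0∞,
    (∀ᵐ t ∂(volume.restrict (Set.Ioi (0 : ℝ))), g t ≤ f t) → ρ g ≤ ρ f
  fatou : ∀ (fn : ℕ → ℝ → ℝ≥0∞) (f : ℝ → ℝ≥0∞),
    (∀ n, ∀ᵐ t ∂(volume.restrict (Set.Ioi (0 : ℝ))), fn n t ≤ fn (n + 1) t) →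
    (∀ᵐ t ∂(volume.restrict (Set.Ioi (0 : ℝ))),
      Filter.Tendsto (fun n => fn n t) Filter.atTop (nhds (f t))) →
    Filter.Tendsto (fun n => ρ (fn n)) Filter.atTop (nhds (ρ f))
  indicator_finite : ∀ ω : Set ℝ, MeasurableSet ω → ω ⊆ Set.Ioi (0 : ℝ) → volume ω < ⊤ →
    ρ (Set.indicator ω fun _ => 1) < ⊤

/-- The quasi-norm of the space `E`: `‖f‖_E = ρ_E (f^*)`. -/
def RIQBFS.normE (E : RIQBFS) (f : ℝ → ℝ) : ℝ≥0∞ := E.ρ (rearr f)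

/-- The operator norm of the dilation operator `(D_a f)(t) = f (a t)` on `E`. -/
def dilNorm (E : RIQBFS) (a : ℝ) : ℝ≥0∞ :=
  ⨆ (f : ℝ → ℝ) (_ : Measurable f) (_ : E.normE f ≤ 1), E.normE fun t => f (a * t)

/-- The lower Boyd index
`p_E = sup {p > 0 : ∃ c > 0, ∀ 0 < a < 1, ‖D_a‖ ≤ c a^{-1/p}}` (an element of `(0, ∞]`). -/
def lowerBoyd (E : RIQBFS) : ℝ≥0∞ :=
  sSup (ENNReal.ofReal ''
    {p : ℝ | 0 < p ∧ ∃ c : ℝ, 0 < c ∧ ∀ a : ℝ, 0 < a → a < 1 →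
      dilNorm E a ≤ ENNReal.ofReal (c * a ^ (-(1 / p)))})

/-- The upper Boyd index
`q_E = inf {q > 0 : ∃ c > 0, ∀ a ≥ 1, ‖D_a‖ ≤ c a^{-1/q}}` (an element of `(0, ∞]`,
with `inf ∅ = ∞`). -/
def upperBoyd (E : RIQBFS) : ℝ≥0∞ :=
  sInf (ENNReal.ofReal ''
    {q : ℝ | 0 < q ∧ ∃ c : ℝ, 0 < c ∧ ∀ a : ℝ, 1 ≤ a →
      dilNorm E a ≤ ENNReal.ofReal (c * a ^ (-(1 / q)))})

/-- The averaging operator `H^{(U,W)}` (for `W = ⊤` this is `H^{(U,∞)}`):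
`(H^{(U,W)}f)(t) = t^{-1/U} (∫_0^t (v^{1/U} f^*(v))^W dv/v)^{1/W}`,
`(H^{(U,∞)}f)(t) = t^{-1/U} sup_{0<v<t} v^{1/U} f^*(v)`. -/
def avgH (U : ℝ) (W : ℝ≥0∞) (f : ℝ → ℝ) (t : ℝ) : ℝ≥0∞ :=
  if W = ⊤ then
    ENNReal.ofReal (t ^ (-(1 / U))) *
      ⨆ v ∈ Set.Ioo (0 : ℝ) t, ENNReal.ofReal (v ^ (1 / U)) * rearr f v
  else
    ENNReal.ofReal (t ^ (-(1 / U))) *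
      (∫⁻ v in Set.Ioo (0 : ℝ) t,
          (ENNReal.ofReal (v ^ (1 / U)) * rearr f v) ^ W.toReal / ENNReal.ofReal v) ^
        (1 / W.toReal)

theorem rearr_antitone (f : ℝ → ℝ) : Antitone (rearr f) := by
  intro t₁ t₂ h
  exact sInf_le_sInf fun lam hlam => hlam.trans (ENNReal.ofReal_le_ofReal h)

theorem rearr_dilate (f : ℝ → ℝ) {a : ℝ} (ha : 0 < a) (t : ℝ) :
    rearr (fun s => f (a * s)) t = rearr f (a * t) := by
  unfold rearr
  congr 1
  ext lam
  have key : {s : ℝ | 0 < s ∧ lam < ENNReal.ofReal |f (a * s)|}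
      = (a * ·) ⁻¹' {u : ℝ | 0 < u ∧ lam < ENNReal.ofReal |f u|} := by
    ext s
    simp only [Set.mem_setOf_eq, Set.mem_preimage]
    constructor
    · rintro ⟨hs, h2⟩; exact ⟨mul_pos ha hs, h2⟩
    · rintro ⟨hs, h2⟩
      refine ⟨?_, h2⟩
      by_contra hneg
      push_neg at hneg
      have : a * s ≤ 0 := mul_nonpos_of_nonneg_of_nonpos ha.le hneg
      exact absurd hs (not_lt.mpr this)
  simp only [Set.mem_setOf_eq, key, Real.volume_preimage_mul_left ha.ne' _]
  rw [abs_of_pos (inv_pos.mpr ha)]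
  rw [ENNReal.ofReal_mul ha.le]
  constructor
  · intro h
    have := mul_le_mul_right h (ENNReal.ofReal a)
    rw [← mul_assoc, ← ENNReal.ofReal_mul ha.le, mul_inv_cancel₀ ha.ne', ENNReal.ofReal_one,
      one_mul] at this
    exact this
  · intro h
    calc ENNReal.ofReal a⁻¹ * volume {u : ℝ | 0 < u ∧ lam < ENNReal.ofReal |f u|}
        ≤ ENNReal.ofReal a⁻¹ * (ENNReal.ofReal a * ENNReal.ofReal t) := mul_le_mul_right h _
      _ = ENNReal.ofReal t := by
          rw [← mul_assoc, ← ENNReal.ofReal_mul (inv_pos.mpr ha).le, inv_mul_cancel₀ ha.ne',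
            ENNReal.ofReal_one, one_mul]

theorem rearr_smul (f : ℝ → ℝ) {c : ℝ} (hc : 0 < c) (t : ℝ) :
    rearr (fun s => c * f s) t = ENNReal.ofReal c * rearr f t := by
  unfold rearr
  have hco : (ENNReal.ofReal c) ≠ 0 := by simp [hc]
  have hct : (ENNReal.ofReal c) ≠ ⊤ := ENNReal.ofReal_ne_top
  have hset : ∀ lam : ℝ≥0∞, {s : ℝ | 0 < s ∧ lam < ENNReal.ofReal |c * f s|}
      = {s : ℝ | 0 < s ∧ lam / ENNReal.ofReal c < ENNReal.ofReal |f s|} := by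
    intro lam
    ext s
    simp only [Set.mem_setOf_eq, abs_mul, abs_of_pos hc, ENNReal.ofReal_mul hc.le]
    rw [ENNReal.div_lt_iff (Or.inl hco) (Or.inl hct), mul_comm]
  have cancel : ∀ lam : ℝ≥0∞, ENNReal.ofReal c * lam / ENNReal.ofReal c = lam := by
    intro lam
    rw [mul_comm, mul_div_assoc, ENNReal.div_self hco hct, mul_one]
  have hmemc : ∀ lam : ℝ≥0∞,
      volume {s : ℝ | 0 < s ∧ lam < ENNReal.ofReal |f s|} ≤ ENNReal.ofReal t →
      volume {s : ℝ | 0 < s ∧ ENNReal.ofReal c * lam < ENNReal.ofReal |c * f s|}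
        ≤ ENNReal.ofReal t := by
    intro lam h
    rw [hset, cancel]
    exact h
  apply le_antisymm
  · conv_rhs => rw [sInf_eq_iInf', ENNReal.mul_iInf_of_ne hco hct]
    apply le_iInf
    rintro ⟨lam, hlam⟩
    exact sInf_le (hmemc lam hlam)
  · apply le_sInf
    intro lam hlam
    simp only [Set.mem_setOf_eq] at hlam
    rw [hset] at hlam
    have h1 : sInf {l : ℝ≥0∞ |
          volume {s : ℝ | 0 < s ∧ l < ENNReal.ofReal |f s|} ≤ ENNReal.ofReal t}
        ≤ lam / ENNReal.ofReal c := sInf_le hlam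
    calc ENNReal.ofReal c * sInf {l : ℝ≥0∞ |
          volume {s : ℝ | 0 < s ∧ l < ENNReal.ofReal |f s|} ≤ ENNReal.ofReal t}
        ≤ ENNReal.ofReal c * (lam / ENNReal.ofReal c) := mul_le_mul_right h1 _
      _ ≤ lam := ENNReal.mul_div_le

theorem rho_zero (E : RIQBFS) : E.ρ (fun _ => 0) = 0 :=
  (E.eq_zero_iff _).mpr (Filter.Eventually.of_forall fun _ => rfl)

theorem rearr_eq_zero (E : RIQBFS) (f : ℝ → ℝ) (hN : E.ρ (rearr f) = 0) :
    ∀ t : ℝ, 0 < t → rearr f t = 0 := by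
  intro t0 ht0
  by_contra hne
  have hae := (E.eq_zero_iff _).mp hN
  have hsub : Set.Ioo 0 t0 ⊆ {t : ℝ | rearr f t ≠ 0} := by
    intro t ht
    have : rearr f t0 ≤ rearr f t := rearr_antitone f ht.2.le
    simp only [Set.mem_setOf_eq]
    intro h0
    exact hne (le_antisymm (h0 ▸ this) zero_le)
  have h0 : (volume.restrict (Set.Ioi (0:ℝ))) {t : ℝ | rearr f t ≠ 0} = 0 := hae
  have h1 : (volume.restrict (Set.Ioi (0:ℝ))) (Set.Ioo 0 t0) = 0 :=
    measure_mono_null hsub h0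
  rw [Measure.restrict_apply' measurableSet_Ioi] at h1
  have : Set.Ioo (0:ℝ) t0 ∩ Set.Ioi 0 = Set.Ioo 0 t0 := by
    ext x; simp only [Set.mem_inter_iff, Set.mem_Ioo, Set.mem_Ioi]
    exact ⟨fun h => h.1, fun h => ⟨h, h.1⟩⟩
  rw [this, Real.volume_Ioo] at h1
  simp only [ENNReal.ofReal_eq_zero, sub_nonpos] at h1
  exact absurd h1 (not_le.mpr (by linarith))

theorem dil_bound (E : RIQBFS) (f : ℝ → ℝ) (hf : Measurable f) {a : ℝ} (ha : 0 < a)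
    {K : ℝ≥0∞} (hK0 : K ≠ 0) (hdil : dilNorm E a ≤ K) :
    E.ρ (fun t => rearr f (a * t)) ≤ K * E.ρ (rearr f) := by
  set N := E.ρ (rearr f) with hNdef
  rcases eq_or_ne N 0 with hN | hN
  · have hz : E.ρ (fun t => rearr f (a * t)) = 0 := by
      rw [E.eq_zero_iff]
      filter_upwards [ae_restrict_mem measurableSet_Ioi] with t ht
      exact rearr_eq_zero E f hN (a * t) (mul_pos ha ht)
    simp [hz]
  rcases eq_or_ne N ⊤ with hT | hT
  · rw [hT, ENNReal.mul_top hK0]; exact le_top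
  -- main case
  set ν : ℝ≥0 := N.toNNReal with hνdef
  have hν0 : ν ≠ 0 := by
    simp [hνdef, ENNReal.toNNReal_eq_zero_iff, hN, hT]
  have hνN : (ν : ℝ≥0∞) = N := ENNReal.coe_toNNReal hT
  have hνR : (0:ℝ) < (ν : ℝ)⁻¹ := by positivity
  set f₀ : ℝ → ℝ := fun s => (ν : ℝ)⁻¹ * f s with hf₀def
  have hmeas0 : Measurable f₀ := (measurable_const.mul hf)
  have hrearr0 : ∀ t, rearr f₀ t = (ν⁻¹ : ℝ≥0) * rearr f t := by
    intro t
    rw [hf₀def, rearr_smul f hνR t,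
      show ((ν:ℝ))⁻¹ = ((ν⁻¹ : ℝ≥0) : ℝ) by simp, ENNReal.ofReal_coe_nnreal]
  have hnorm0 : E.normE f₀ = 1 := by
    unfold RIQBFS.normE
    calc E.ρ (rearr f₀) = E.ρ (fun t => (ν⁻¹ : ℝ≥0) * rearr f t) := by
          congr 1; funext t; exact hrearr0 t
      _ = (ν⁻¹ : ℝ≥0) * N := E.smul_eq _ _
      _ = 1 := by
          rw [ENNReal.coe_inv hν0, hνN]
          exact ENNReal.inv_mul_cancel (hνN ▸ ENNReal.coe_ne_zero.mpr hν0) hT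
  have hle1 : E.normE f₀ ≤ 1 := le_of_eq hnorm0
  have hsup : E.normE (fun t => f₀ (a * t)) ≤ dilNorm E a := by
    unfold dilNorm
    refine le_trans ?_ (le_iSup _ f₀)
    exact le_iSup_of_le hmeas0 (le_iSup_of_le hle1 le_rfl)
  have hcomp : E.normE (fun t => f₀ (a * t))
      = (ν⁻¹ : ℝ≥0) * E.ρ (fun t => rearr f (a * t)) := by
    unfold RIQBFS.normE
    have : rearr (fun t => f₀ (a * t)) = fun t => (ν⁻¹ : ℝ≥0) * rearr f (a * t) := by
      funext t
      have h1 : rearr (fun s => f₀ (a * s)) t = rearr f₀ (a * t) := rearr_dilate f₀ ha t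
      rw [h1, hrearr0]
    rw [this]
    exact E.smul_eq _ _
  have hfinal : (ν⁻¹ : ℝ≥0) * E.ρ (fun t => rearr f (a * t)) ≤ K := by
    rw [← hcomp]; exact hsup.trans hdil
  have := mul_le_mul_right hfinal (ν : ℝ≥0∞)
  rw [← mul_assoc, ENNReal.coe_inv hν0, ENNReal.mul_inv_cancel (ENNReal.coe_ne_zero.mpr hν0)
    ENNReal.coe_ne_top, one_mul] at this
  calc E.ρ (fun t => rearr f (a * t)) ≤ (ν : ℝ≥0∞) * K := this
    _ = K * N := by rw [hνN, mul_comm]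

theorem rho_finsum_le (E : RIQBFS) : ∀ (n : ℕ) (h : ℕ → ℝ → ℝ≥0∞),
    E.ρ (fun t => ∑ k ∈ Finset.range n, h k t)
      ≤ ∑ k ∈ Finset.range n, (ENNReal.ofReal E.C) ^ (k + 1) * E.ρ (h k) := by
  intro n
  induction n with
  | zero => intro h; simp [rho_zero E]
  | succ n ih =>
    intro h
    have hrw : (fun t => ∑ k ∈ Finset.range (n+1), h k t)
        = fun t => (∑ k ∈ Finset.range n, h (k+1) t) + h 0 t := by
      funext t; exact Finset.sum_range_succ' _ n
    rw [hrw]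
    calc E.ρ (fun t => (∑ k ∈ Finset.range n, h (k+1) t) + h 0 t)
        ≤ ENNReal.ofReal E.C * (E.ρ (fun t => ∑ k ∈ Finset.range n, h (k+1) t) + E.ρ (h 0)) :=
          E.quasi_triangle _ _
      _ ≤ ENNReal.ofReal E.C * ((∑ k ∈ Finset.range n,
            (ENNReal.ofReal E.C) ^ (k + 1) * E.ρ (h (k+1))) + E.ρ (h 0)) := by
          gcongr
          exact ih (fun k => h (k+1))
      _ = (∑ k ∈ Finset.range n, (ENNReal.ofReal E.C) ^ (k + 2) * E.ρ (h (k+1)))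
            + ENNReal.ofReal E.C * E.ρ (h 0) := by
          rw [mul_add, Finset.mul_sum]
          congr 1
          apply Finset.sum_congr rfl
          intro k _
          ring
      _ = ∑ k ∈ Finset.range (n+1), (ENNReal.ofReal E.C) ^ (k + 1) * E.ρ (h k) := by
          rw [Finset.sum_range_succ' (fun k => (ENNReal.ofReal E.C) ^ (k + 1) * E.ρ (h k)) n]
          simp [pow_succ, pow_one]

theorem rho_tsum_le (E : RIQBFS) (h : ℕ → ℝ → ℝ≥0∞) :
    E.ρ (fun t => ∑' k, h k t) ≤ ∑' k, (ENNReal.ofReal E.C) ^ (k + 1) * E.ρ (h k) := by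
  have hmono : ∀ n, ∀ᵐ t ∂(volume.restrict (Set.Ioi (0:ℝ))),
      (∑ k ∈ Finset.range n, h k t) ≤ ∑ k ∈ Finset.range (n+1), h k t := by
    intro n
    apply Filter.Eventually.of_forall
    intro t
    exact Finset.sum_le_sum_of_subset (Finset.range_subset_range.mpr (Nat.le_succ n))
  have htend : ∀ᵐ t ∂(volume.restrict (Set.Ioi (0:ℝ))),
      Filter.Tendsto (fun n => ∑ k ∈ Finset.range n, h k t) Filter.atTop
        (nhds (∑' k, h k t)) := by
    apply Filter.Eventually.of_forall
    intro t
    exact ENNReal.tendsto_nat_tsum _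
  have hf := E.fatou (fun n t => ∑ k ∈ Finset.range n, h k t) (fun t => ∑' k, h k t) hmono htend
  refine le_of_tendsto' hf fun n => ?_
  exact (rho_finsum_le E n h).trans (ENNReal.sum_le_tsum _)

theorem covering {b : ℝ} (hb : 1 < b) {t v : ℝ} (ht : 0 < t) (hv : 0 < v) (hvt : v < t) :
    ∃ k : ℕ, b ^ (-(k:ℝ) - 1) * t ≤ v ∧ v < b ^ (-(k:ℝ)) * t := by
  have hb0 : (0:ℝ) < b := lt_trans one_pos hb
  have hex : ∃ n : ℕ, b ^ (-(n:ℝ) - 1) * t ≤ v := by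
    obtain ⟨n, hn⟩ := pow_unbounded_of_one_lt (t / v) hb
    refine ⟨n, ?_⟩
    have h1 : t / v < b ^ (n:ℝ) := by rwa [Real.rpow_natCast]
    have h2 : t / b ^ ((n:ℝ) + 1) ≤ v := by
      rw [div_le_iff₀ (Real.rpow_pos_of_pos hb0 _)]
      have hbn : b ^ (n:ℝ) ≤ b ^ ((n:ℝ)+1) :=
        Real.rpow_le_rpow_of_exponent_le hb.le (by linarith)
      calc t = (t / v) * v := by field_simp
        _ ≤ b ^ ((n:ℝ)+1) * v := by
            apply mul_le_mul_of_nonneg_right _ hv.le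
            linarith
        _ = v * b ^ ((n:ℝ)+1) := mul_comm _ _
    calc b ^ (-(n:ℝ) - 1) * t = t / b ^ ((n:ℝ) + 1) := by
          rw [show -(n:ℝ) - 1 = -((n:ℝ)+1) by ring, Real.rpow_neg hb0.le]
          field_simp
      _ ≤ v := h2
  classical
  set k := Nat.find hex with hk
  have hk1 : b ^ (-(k:ℝ) - 1) * t ≤ v := Nat.find_spec hex
  refine ⟨k, hk1, ?_⟩
  rcases Nat.eq_zero_or_pos k with h0 | hpos
  · rw [h0]
    simp only [Nat.cast_zero, neg_zero, Real.rpow_zero, one_mul]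
    exact hvt
  · obtain ⟨j, hj⟩ := Nat.exists_eq_succ_of_ne_zero hpos.ne'
    have hnot : ¬ (b ^ (-(j:ℝ) - 1) * t ≤ v) := Nat.find_min hex (by omega)
    push_neg at hnot
    have : -(j:ℝ) - 1 = -(k:ℝ) := by
      rw [hj]; push_cast; ring
    rwa [this] at hnot

theorem dk_eq {b U α : ℝ} (hb : 1 < b) (hU : 0 < U) (k : ℕ) {t : ℝ} (ht : 0 < t) :
    ((b ^ (-(k:ℝ)) * t) ^ (1/U))
      = t ^ (1/U) * (b ^ (-(k:ℝ) * (1/U - α)) * b ^ (-(k:ℝ) * α)) := by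
  have hb0 : (0:ℝ) < b := lt_trans one_pos hb
  have hexp : -(k:ℝ) * (1/U - α) + (-(k:ℝ) * α) = (-(k:ℝ)) * (1/U) := by ring
  calc (b ^ (-(k:ℝ)) * t) ^ (1/U)
      = (b ^ (-(k:ℝ))) ^ (1/U) * t ^ (1/U) :=
        Real.mul_rpow (Real.rpow_nonneg hb0.le _) ht.le
    _ = b ^ ((-(k:ℝ)) * (1/U)) * t ^ (1/U) := by rw [← Real.rpow_mul hb0.le]
    _ = t ^ (1/U) * (b ^ (-(k:ℝ) * (1/U - α)) * b ^ (-(k:ℝ) * α)) := by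
        rw [← Real.rpow_add hb0, hexp, mul_comm]

theorem upper_top (f : ℝ → ℝ) {U b α : ℝ} (hU : 0 < U) (hb : 1 < b) (hαU : α ≤ 1/U)
    {t : ℝ} (ht : 0 < t) :
    avgH U ⊤ f t ≤ ∑' k : ℕ, ENNReal.ofReal (b ^ (-(k:ℝ) * α)) *
      rearr f (b ^ (-(k:ℝ) - 1) * t) := by
  have hb0 : (0:ℝ) < b := lt_trans one_pos hb
  rw [avgH, if_pos rfl]
  set S := ∑' k : ℕ, ENNReal.ofReal (b ^ (-(k:ℝ) * α)) * rearr f (b ^ (-(k:ℝ) - 1) * t)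
    with hSdef
  have key : (⨆ v ∈ Set.Ioo (0:ℝ) t, ENNReal.ofReal (v ^ (1/U)) * rearr f v)
      ≤ ENNReal.ofReal (t ^ (1/U)) * S := by
    apply iSup₂_le
    intro v hv
    obtain ⟨k, hk1, hk2⟩ := covering hb ht hv.1 hv.2
    have h1 : ENNReal.ofReal (v ^ (1/U)) * rearr f v
        ≤ ENNReal.ofReal ((b ^ (-(k:ℝ)) * t) ^ (1/U)) * rearr f (b ^ (-(k:ℝ) - 1) * t) := by
      apply mul_le_mul'
      · apply ENNReal.ofReal_le_ofReal
        exact Real.rpow_le_rpow hv.1.le hk2.le (by positivity)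
      · exact rearr_antitone f hk1
    refine h1.trans ?_
    rw [dk_eq (α := α) hb hU k ht,
      ENNReal.ofReal_mul (Real.rpow_nonneg ht.le _),
      ENNReal.ofReal_mul (Real.rpow_nonneg hb0.le _), mul_assoc, mul_assoc]
    apply mul_le_mul_right
    have hle1 : ENNReal.ofReal (b ^ (-(k:ℝ) * (1/U - α))) ≤ 1 := by
      rw [show (1:ℝ≥0∞) = ENNReal.ofReal 1 by simp]
      apply ENNReal.ofReal_le_ofReal
      apply Real.rpow_le_one_of_one_le_of_nonpos hb.le
      have : (0:ℝ) ≤ (k:ℝ) * (1/U - α) := by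
        apply mul_nonneg (Nat.cast_nonneg k)
        linarith
      linarith
    calc ENNReal.ofReal (b ^ (-(k:ℝ) * (1/U - α))) *
          (ENNReal.ofReal (b ^ (-(k:ℝ) * α)) * rearr f (b ^ (-(k:ℝ) - 1) * t))
        ≤ 1 * (ENNReal.ofReal (b ^ (-(k:ℝ) * α)) * rearr f (b ^ (-(k:ℝ) - 1) * t)) :=
          mul_le_mul_left hle1 _
      _ = ENNReal.ofReal (b ^ (-(k:ℝ) * α)) * rearr f (b ^ (-(k:ℝ) - 1) * t) := one_mul _
      _ ≤ S := ENNReal.le_tsum k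
  calc ENNReal.ofReal (t ^ (-(1/U))) * (⨆ v ∈ Set.Ioo (0:ℝ) t,
        ENNReal.ofReal (v ^ (1/U)) * rearr f v)
      ≤ ENNReal.ofReal (t ^ (-(1/U))) * (ENNReal.ofReal (t ^ (1/U)) * S) :=
        mul_le_mul_right key _
    _ = ENNReal.ofReal (t ^ (-(1/U)) * t ^ (1/U)) * S := by
        rw [ENNReal.ofReal_mul (Real.rpow_nonneg ht.le _), mul_assoc]
    _ = S := by
        rw [← Real.rpow_add ht, neg_add_cancel, Real.rpow_zero, ENNReal.ofReal_one, one_mul]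

theorem upper_fin (f : ℝ → ℝ) {U b α w : ℝ} (hU : 0 < U) (hb : 1 < b)
    (hαU : α < 1/U) (hw : 0 < w) {W : ℝ≥0∞} (hWt : W ≠ ⊤) (hWw : W.toReal = w)
    {t : ℝ} (ht : 0 < t) :
    avgH U W f t ≤
      (ENNReal.ofReal b * (1 - ENNReal.ofReal (b ^ (-(w * (1/U - α)))))⁻¹) ^ (1/w) *
        ∑' k : ℕ, ENNReal.ofReal (b ^ (-(k:ℝ) * α)) * rearr f (b ^ (-(k:ℝ) - 1) * t) := by
  have hb0 : (0:ℝ) < b := lt_trans one_pos hb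
  set S := ∑' k : ℕ, ENNReal.ofReal (b ^ (-(k:ℝ) * α)) * rearr f (b ^ (-(k:ℝ) - 1) * t)
    with hSdef
  set q : ℝ≥0∞ := ENNReal.ofReal (b ^ (-(w * (1/U - α)))) with hqdef
  set c : ℕ → ℝ := fun k => b ^ (-(k:ℝ) - 1) * t with hcdef
  set d : ℕ → ℝ := fun k => b ^ (-(k:ℝ)) * t with hddef
  have hck : ∀ k, 0 < c k := fun k => mul_pos (Real.rpow_pos_of_pos hb0 _) ht
  have hdk : ∀ k, 0 < d k := fun k => mul_pos (Real.rpow_pos_of_pos hb0 _) ht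
  have hdc : ∀ k, d k = b * c k := by
    intro k
    have hbb : b ^ (-(k:ℝ)) = b * b ^ (-(k:ℝ) - 1) := by
      have h2 := Real.rpow_add hb0 1 (-(k:ℝ) - 1)
      rw [Real.rpow_one] at h2
      rw [← h2]
      congr 1
      ring
    rw [hcdef, hddef]
    simp only
    rw [hbb, mul_assoc]
  have hT : ENNReal.ofReal (t ^ (-(1/U))) * ENNReal.ofReal (t ^ (1/U)) = 1 := by
    rw [← ENNReal.ofReal_mul (Real.rpow_nonneg ht.le _), ← Real.rpow_add ht,
      neg_add_cancel, Real.rpow_zero, ENNReal.ofReal_one]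
  set g : ℕ → ℝ≥0∞ := fun k => rearr f (c k) with hgdef
  set F : ℝ → ℝ≥0∞ := fun v => (ENNReal.ofReal (v ^ (1/U)) * rearr f v) ^ w / ENNReal.ofReal v
    with hFdef
  -- Step 1: covering
  have hcover : Set.Ioo (0:ℝ) t ⊆ ⋃ k : ℕ, Set.Ico (c k) (d k) := by
    intro v hv
    obtain ⟨k, hk1, hk2⟩ := covering hb ht hv.1 hv.2
    exact Set.mem_iUnion.mpr ⟨k, hk1, hk2⟩
  have hI1 : (∫⁻ v in Set.Ioo (0:ℝ) t, F v) ≤ ∑' k : ℕ, ∫⁻ v in Set.Ico (c k) (d k), F v :=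
    (lintegral_mono_set hcover).trans (lintegral_iUnion_le _ _)
  -- Step 2: piecewise bound
  have hpiece : ∀ k : ℕ, (∫⁻ v in Set.Ico (c k) (d k), F v)
      ≤ ENNReal.ofReal b * ((ENNReal.ofReal (d k ^ (1/U))) ^ w * g k ^ w) := by
    intro k
    set X : ℝ≥0∞ := ENNReal.ofReal (d k ^ (1/U)) * g k with hXdef
    have hbd : ∀ v ∈ Set.Ico (c k) (d k), F v ≤ X ^ w / ENNReal.ofReal (c k) := by
      intro v hv
      have hv0 : 0 < v := lt_of_lt_of_le (hck k) hv.1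
      apply ENNReal.div_le_div
      · apply ENNReal.rpow_le_rpow _ hw.le
        apply mul_le_mul'
        · exact ENNReal.ofReal_le_ofReal (Real.rpow_le_rpow hv0.le hv.2.le (by positivity))
        · exact rearr_antitone f hv.1
      · exact ENNReal.ofReal_le_ofReal hv.1
    calc (∫⁻ v in Set.Ico (c k) (d k), F v)
        ≤ ∫⁻ _ in Set.Ico (c k) (d k), X ^ w / ENNReal.ofReal (c k) := by
          apply lintegral_mono_ae
          filter_upwards [ae_restrict_mem measurableSet_Ico] with v hv
          exact hbd v hv
      _ = X ^ w / ENNReal.ofReal (c k) * volume (Set.Ico (c k) (d k)) :=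
          setLIntegral_const _ _
      _ ≤ X ^ w / ENNReal.ofReal (c k) * ENNReal.ofReal (d k) := by
          apply mul_le_mul_right
          rw [Real.volume_Ico]
          exact ENNReal.ofReal_le_ofReal (by linarith [hck k])
      _ = ENNReal.ofReal b * (X ^ w / ENNReal.ofReal (c k) * ENNReal.ofReal (c k)) := by
          rw [hdc k, ENNReal.ofReal_mul hb0.le]
          ring
      _ = ENNReal.ofReal b * X ^ w := by
          rw [ENNReal.div_mul_cancel (by simp [hck k]) ENNReal.ofReal_ne_top]
      _ = ENNReal.ofReal b * ((ENNReal.ofReal (d k ^ (1/U))) ^ w * g k ^ w) := by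
          rw [hXdef, ENNReal.mul_rpow_of_nonneg _ _ hw.le]
  -- Step 3: term bound
  have hterm : ∀ k : ℕ, ENNReal.ofReal b * ((ENNReal.ofReal (d k ^ (1/U))) ^ w * g k ^ w)
      ≤ (ENNReal.ofReal b * (ENNReal.ofReal (t ^ (1/U))) ^ w * S ^ w) * q ^ k := by
    intro k
    have hdkeq : ENNReal.ofReal (d k ^ (1/U))
        = ENNReal.ofReal (t ^ (1/U)) *
          (ENNReal.ofReal (b ^ (-(k:ℝ) * (1/U - α))) * ENNReal.ofReal (b ^ (-(k:ℝ) * α))) := by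
      rw [hddef]
      simp only
      rw [dk_eq (α := α) hb hU k ht,
        ENNReal.ofReal_mul (Real.rpow_nonneg ht.le _),
        ENNReal.ofReal_mul (Real.rpow_nonneg hb0.le _)]
    have hQq : (ENNReal.ofReal (b ^ (-(k:ℝ) * (1/U - α)))) ^ w = q ^ k := by
      rw [ENNReal.ofReal_rpow_of_pos (Real.rpow_pos_of_pos hb0 _),
        ← Real.rpow_mul hb0.le, hqdef, ← ENNReal.ofReal_pow (Real.rpow_nonneg hb0.le _),
        ← Real.rpow_natCast (b ^ (-(w * (1/U - α)))) k, ← Real.rpow_mul hb0.le]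
      congr 2
      ring
    have hAS : (ENNReal.ofReal (b ^ (-(k:ℝ) * α))) ^ w * g k ^ w ≤ S ^ w := by
      rw [← ENNReal.mul_rpow_of_nonneg _ _ hw.le]
      apply ENNReal.rpow_le_rpow _ hw.le
      exact ENNReal.le_tsum k
    calc ENNReal.ofReal b * ((ENNReal.ofReal (d k ^ (1/U))) ^ w * g k ^ w)
        = ENNReal.ofReal b * ((ENNReal.ofReal (t ^ (1/U))) ^ w * (q ^ k *
            ((ENNReal.ofReal (b ^ (-(k:ℝ) * α))) ^ w * g k ^ w))) := by
          rw [hdkeq, ENNReal.mul_rpow_of_nonneg _ _ hw.le,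
            ENNReal.mul_rpow_of_nonneg _ _ hw.le, hQq]
          ring
      _ ≤ ENNReal.ofReal b * ((ENNReal.ofReal (t ^ (1/U))) ^ w * (q ^ k * S ^ w)) := by
          gcongr
      _ = (ENNReal.ofReal b * (ENNReal.ofReal (t ^ (1/U))) ^ w * S ^ w) * q ^ k := by
          ring
  -- Step 4: sum up
  have hq1 : q < 1 := by
    rw [hqdef, ← ENNReal.ofReal_one]
    apply (ENNReal.ofReal_lt_ofReal_iff one_pos).mpr
    apply Real.rpow_lt_one_of_one_lt_of_neg hb
    have : 0 < w * (1/U - α) := mul_pos hw (by linarith)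
    linarith
  have hIsum : (∫⁻ v in Set.Ioo (0:ℝ) t, F v)
      ≤ (ENNReal.ofReal b * (ENNReal.ofReal (t ^ (1/U))) ^ w * S ^ w) * (1 - q)⁻¹ := by
    calc (∫⁻ v in Set.Ioo (0:ℝ) t, F v)
        ≤ ∑' k : ℕ, ∫⁻ v in Set.Ico (c k) (d k), F v := hI1
      _ ≤ ∑' k : ℕ, (ENNReal.ofReal b * (ENNReal.ofReal (t ^ (1/U))) ^ w * S ^ w) * q ^ k :=
          ENNReal.tsum_le_tsum fun k => (hpiece k).trans (hterm k)
      _ = (ENNReal.ofReal b * (ENNReal.ofReal (t ^ (1/U))) ^ w * S ^ w) * ∑' k : ℕ, q ^ k :=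
          ENNReal.tsum_mul_left
      _ = (ENNReal.ofReal b * (ENNReal.ofReal (t ^ (1/U))) ^ w * S ^ w) * (1 - q)⁻¹ := by
          rw [ENNReal.tsum_geometric]
  -- Step 5: conclude
  rw [avgH, if_neg hWt, hWw]
  calc ENNReal.ofReal (t ^ (-(1/U))) * (∫⁻ v in Set.Ioo (0:ℝ) t, F v) ^ (1/w)
      ≤ ENNReal.ofReal (t ^ (-(1/U))) *
        ((ENNReal.ofReal b * (ENNReal.ofReal (t ^ (1/U))) ^ w * S ^ w) * (1 - q)⁻¹) ^ (1/w) := by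
        apply mul_le_mul_right
        exact ENNReal.rpow_le_rpow hIsum (by positivity)
    _ = ENNReal.ofReal (t ^ (-(1/U))) *
        ((ENNReal.ofReal b * (1 - q)⁻¹) ^ (1/w) * (ENNReal.ofReal (t ^ (1/U)) * S)) := by
        rw [show ENNReal.ofReal b * (ENNReal.ofReal (t ^ (1/U))) ^ w * S ^ w * (1 - q)⁻¹
            = (ENNReal.ofReal b * (1 - q)⁻¹) * ((ENNReal.ofReal (t ^ (1/U)) * S) ^ w) by
          rw [ENNReal.mul_rpow_of_nonneg _ _ hw.le]; ring]
        rw [ENNReal.mul_rpow_of_nonneg _ _ (by positivity : (0:ℝ) ≤ 1/w),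
          ← ENNReal.rpow_mul, mul_one_div_cancel hw.ne', ENNReal.rpow_one]
    _ = (ENNReal.ofReal b * (1 - q)⁻¹) ^ (1/w) * S := by
        rw [show ENNReal.ofReal (t ^ (-(1/U))) *
            ((ENNReal.ofReal b * (1 - q)⁻¹) ^ (1/w) * (ENNReal.ofReal (t ^ (1/U)) * S))
            = (ENNReal.ofReal b * (1 - q)⁻¹) ^ (1/w) *
              ((ENNReal.ofReal (t ^ (-(1/U))) * ENNReal.ofReal (t ^ (1/U))) * S) by ring]
        rw [hT, one_mul]

theorem half_rpow {t e : ℝ} (ht : 0 < t) : (t/2) ^ e = t ^ e * 2⁻¹ ^ e := by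
  rw [div_eq_mul_inv, Real.mul_rpow ht.le (by norm_num)]

theorem lower_top (f : ℝ → ℝ) {U : ℝ} (hU : 0 < U) {t : ℝ} (ht : 0 < t) :
    ENNReal.ofReal ((2:ℝ)⁻¹ ^ (1/U)) * rearr f t ≤ avgH U ⊤ f t := by
  rw [avgH, if_pos rfl]
  have hmem : t/2 ∈ Set.Ioo (0:ℝ) t := by constructor <;> linarith
  have hle : ENNReal.ofReal ((t/2) ^ (1/U)) * rearr f t
      ≤ ⨆ v ∈ Set.Ioo (0:ℝ) t, ENNReal.ofReal (v ^ (1/U)) * rearr f v := by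
    refine le_trans ?_ (le_iSup₂ (f := fun v _ => ENNReal.ofReal (v ^ (1/U)) * rearr f v)
      (t/2) hmem)
    exact mul_le_mul_right (rearr_antitone f (by linarith)) _
  calc ENNReal.ofReal ((2:ℝ)⁻¹ ^ (1/U)) * rearr f t
      = ENNReal.ofReal (t ^ (-(1/U))) * (ENNReal.ofReal ((t/2) ^ (1/U)) * rearr f t) := by
        rw [← mul_assoc, ← ENNReal.ofReal_mul (Real.rpow_nonneg ht.le _), half_rpow ht,
          ← mul_assoc, ← Real.rpow_add ht, neg_add_cancel, Real.rpow_zero, one_mul]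
    _ ≤ ENNReal.ofReal (t ^ (-(1/U))) * ⨆ v ∈ Set.Ioo (0:ℝ) t,
          ENNReal.ofReal (v ^ (1/U)) * rearr f v := mul_le_mul_right hle _

theorem lower_fin (f : ℝ → ℝ) {U w : ℝ} (hU : 0 < U) (hw : 0 < w) {W : ℝ≥0∞}
    (hWt : W ≠ ⊤) (hWw : W.toReal = w) {t : ℝ} (ht : 0 < t) :
    ENNReal.ofReal ((2:ℝ)⁻¹ ^ (1/U) * (2:ℝ)⁻¹ ^ (1/w)) * rearr f t ≤ avgH U W f t := by
  rw [avgH, if_neg hWt, hWw]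
  set X : ℝ≥0∞ := ENNReal.ofReal ((t/2) ^ (1/U)) * rearr f t with hXdef
  set F : ℝ → ℝ≥0∞ := fun v => (ENNReal.ofReal (v ^ (1/U)) * rearr f v) ^ w / ENNReal.ofReal v
    with hFdef
  have ht2 : (0:ℝ) < t/2 := by linarith
  have hbd : ∀ v ∈ Set.Ioo (t/2) t, X ^ w / ENNReal.ofReal t ≤ F v := by
    intro v hv
    have hv0 : (0:ℝ) < v := lt_trans ht2 hv.1
    apply ENNReal.div_le_div
    · apply ENNReal.rpow_le_rpow _ hw.le
      apply mul_le_mul'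
      · exact ENNReal.ofReal_le_ofReal (Real.rpow_le_rpow ht2.le hv.1.le (by positivity))
      · exact rearr_antitone f hv.2.le
    · exact ENNReal.ofReal_le_ofReal hv.2.le
  have hIlow : X ^ w * ENNReal.ofReal (2:ℝ)⁻¹ ≤ ∫⁻ v in Set.Ioo (0:ℝ) t, F v := by
    have h1 : (∫⁻ _ in Set.Ioo (t/2) t, X ^ w / ENNReal.ofReal t)
        ≤ ∫⁻ v in Set.Ioo (t/2) t, F v := by
      apply lintegral_mono_ae
      filter_upwards [ae_restrict_mem measurableSet_Ioo] with v hv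
      exact hbd v hv
    have h2 : (∫⁻ v in Set.Ioo (t/2) t, F v) ≤ ∫⁻ v in Set.Ioo (0:ℝ) t, F v :=
      lintegral_mono_set (fun v hv => ⟨lt_trans ht2 hv.1, hv.2⟩)
    refine le_trans ?_ (h1.trans h2)
    rw [setLIntegral_const, Real.volume_Ioo, show t - t/2 = t/2 by ring]
    rw [ENNReal.div_eq_inv_mul, mul_comm (ENNReal.ofReal t)⁻¹ (X ^ w), mul_assoc]
    apply mul_le_mul_right
    rw [← ENNReal.div_eq_inv_mul, ← ENNReal.ofReal_div_of_pos ht,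
      show t/2/t = (2:ℝ)⁻¹ by field_simp]
  have hTT : ENNReal.ofReal (t ^ (-(1/U))) * ENNReal.ofReal (t ^ (1/U)) = 1 := by
    rw [← ENNReal.ofReal_mul (Real.rpow_nonneg ht.le _), ← Real.rpow_add ht,
      neg_add_cancel, Real.rpow_zero, ENNReal.ofReal_one]
  calc ENNReal.ofReal ((2:ℝ)⁻¹ ^ (1/U) * (2:ℝ)⁻¹ ^ (1/w)) * rearr f t
      = ENNReal.ofReal (t ^ (-(1/U))) * ((X ^ w * ENNReal.ofReal (2:ℝ)⁻¹) ^ (1/w)) := by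
        have h1 : (X ^ w * ENNReal.ofReal (2:ℝ)⁻¹) ^ (1/w)
            = X * ENNReal.ofReal ((2:ℝ)⁻¹ ^ (1/w)) := by
          rw [ENNReal.mul_rpow_of_nonneg _ _ (by positivity : (0:ℝ) ≤ 1/w),
            ← ENNReal.rpow_mul, mul_one_div_cancel hw.ne', ENNReal.rpow_one,
            ENNReal.ofReal_rpow_of_pos (by norm_num : (0:ℝ) < (2:ℝ)⁻¹)]
        rw [h1, hXdef, half_rpow ht,
          ENNReal.ofReal_mul (by positivity : (0:ℝ) ≤ (2:ℝ)⁻¹ ^ (1/U)),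
          ENNReal.ofReal_mul (Real.rpow_nonneg ht.le _)]
        calc ENNReal.ofReal ((2:ℝ)⁻¹ ^ (1/U)) * ENNReal.ofReal ((2:ℝ)⁻¹ ^ (1/w)) * rearr f t
            = (ENNReal.ofReal (t ^ (-(1/U))) * ENNReal.ofReal (t ^ (1/U))) *
              (ENNReal.ofReal ((2:ℝ)⁻¹ ^ (1/U)) * ENNReal.ofReal ((2:ℝ)⁻¹ ^ (1/w)) *
                rearr f t) := by rw [hTT, one_mul]
          _ = ENNReal.ofReal (t ^ (-(1/U))) *
              (ENNReal.ofReal (t ^ (1/U)) * ENNReal.ofReal ((2:ℝ)⁻¹ ^ (1/U)) * rearr f t *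
                ENNReal.ofReal ((2:ℝ)⁻¹ ^ (1/w))) := by ring
    _ ≤ ENNReal.ofReal (t ^ (-(1/U))) * (∫⁻ v in Set.Ioo (0:ℝ) t, F v) ^ (1/w) := by
        apply mul_le_mul_right
        exact ENNReal.rpow_le_rpow hIlow (by positivity)

theorem rho_smul_ofReal (E : RIQBFS) (x : ℝ) (g : ℝ → ℝ≥0∞) :
    E.ρ (fun t => ENNReal.ofReal x * g t) = ENNReal.ofReal x * E.ρ g := by
  have hx : ENNReal.ofReal x = ((x.toNNReal : ℝ≥0) : ℝ≥0∞) := rfl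
  rw [hx]
  exact E.smul_eq _ _

theorem scalar_eq {C0 c₀ b p α δ : ℝ} (hb : 0 < b) (h : 1/p - α = -δ) (k : ℕ) :
    C0 ^ (k+1) * (b ^ (-(k:ℝ) * α)) * (c₀ * (b ^ (-(k:ℝ) - 1)) ^ (-(1/p)))
      = (C0 * c₀ * b ^ (1/p)) * (C0 * b ^ (-δ)) ^ k := by
  have e1 : (b ^ (-(k:ℝ) - 1)) ^ (-(1/p)) = b ^ ((-(k:ℝ) - 1) * (-(1/p))) :=
    (Real.rpow_mul hb.le _ _).symm
  have e2 : (C0 * b ^ (-δ)) ^ k = C0 ^ k * b ^ (-δ * (k:ℝ)) := by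
    rw [mul_pow, ← Real.rpow_natCast (b ^ (-δ)) k, ← Real.rpow_mul hb.le]
  have e3 : b ^ (-(k:ℝ) * α) * b ^ ((-(k:ℝ) - 1) * (-(1/p)))
      = b ^ (1/p) * b ^ (-δ * (k:ℝ)) := by
    rw [← Real.rpow_add hb, ← Real.rpow_add hb]
    congr 1
    have hδ : α = 1/p + δ := by linarith
    rw [hδ]; ring
  rw [e1, e2, pow_succ]
  linear_combination (C0 ^ k * C0 * c₀) * e3

/-- Let `E` be a r.i. quasi-Banach function space on `(0,∞)` with lower Boyd index `p_E`,
and let `0 < U < p_E` and `0 < W ≤ ∞`. Then there exist constants `c, C > 0` such that for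
all measurable `f` on `(0,∞)`: `c ρ_E(f^*) ≤ ρ_E(H^{(U,W)}f) ≤ C ρ_E(f^*)`. -/
theorem stmt3 (E : RIQBFS) (U : ℝ) (hU : 0 < U) (hUE : ENNReal.ofReal U < lowerBoyd E)
    (W : ℝ≥0∞) (hW : 0 < W) :
    ∃ c C : ℝ, 0 < c ∧ 0 < C ∧ ∀ f : ℝ → ℝ, Measurable f →
      ENNReal.ofReal c * E.ρ (rearr f) ≤ E.ρ (avgH U W f) ∧
        E.ρ (avgH U W f) ≤ ENNReal.ofReal C * E.ρ (rearr f) := by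
  have hC0 : (0:ℝ) < E.C := lt_of_lt_of_le one_pos E.one_le_C
  -- extract p and c₀
  rw [lowerBoyd] at hUE
  obtain ⟨x, hxmem, hx⟩ := lt_sSup_iff.mp hUE
  obtain ⟨p, hpmem, rfl⟩ := hxmem
  obtain ⟨hp0, c₀, hc₀, hbound⟩ := hpmem
  have hUp : U < p := (ENNReal.ofReal_lt_ofReal_iff hp0).mp hx
  -- constants
  set δ : ℝ := (1/U - 1/p)/2 with hδdef
  have hinv : 1/p < 1/U := one_div_lt_one_div_of_lt hU hUp
  have hδ : 0 < δ := by rw [hδdef]; linarith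
  set α : ℝ := 1/p + δ with hαdef
  have hα0 : 0 < α := by positivity
  have hαU : α < 1/U := by rw [hαdef, hδdef]; linarith
  have hpα : 1/p - α = -δ := by rw [hαdef]; ring
  set b : ℝ := max 2 ((2 * E.C) ^ (1/δ)) with hbdef
  have hb : 1 < b := lt_of_lt_of_le one_lt_two (le_max_left _ _)
  have hb0 : (0:ℝ) < b := lt_trans one_pos hb
  have h2C : (0:ℝ) < 2 * E.C := by linarith
  have hrle : E.C * b ^ (-δ) ≤ 1/2 := by
    have h1 : ((2 * E.C) ^ (1/δ)) ^ δ = 2 * E.C := by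
      rw [← Real.rpow_mul h2C.le, one_div_mul_cancel hδ.ne', Real.rpow_one]
    have hbδ : 2 * E.C ≤ b ^ δ := by
      calc 2 * E.C = ((2 * E.C) ^ (1/δ)) ^ δ := h1.symm
        _ ≤ b ^ δ := Real.rpow_le_rpow (Real.rpow_nonneg h2C.le _) (le_max_right _ _) hδ.le
    have hbδ0 : (0:ℝ) < b ^ δ := Real.rpow_pos_of_pos hb0 _
    calc E.C * b ^ (-δ) = E.C / b ^ δ := by
          rw [Real.rpow_neg hb0.le]; ring
      _ ≤ E.C / (2 * E.C) := by gcongr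
      _ = 1/2 := by rw [div_eq_div_iff h2C.ne' two_ne_zero]; ring
  set r : ℝ := E.C * b ^ (-δ) with hrdef
  have hr0 : 0 ≤ r := by positivity
  have hrlt1 : ENNReal.ofReal r < 1 := by
    calc ENNReal.ofReal r ≤ ENNReal.ofReal (1/2) := ENNReal.ofReal_le_ofReal hrle
      _ < 1 := by rw [ENNReal.ofReal_lt_one]; norm_num
  set M : ℝ≥0∞ := ENNReal.ofReal (E.C * c₀ * b ^ (1/p)) * (1 - ENNReal.ofReal r)⁻¹
    with hMdef
  have hMfin : M ≠ ⊤ := by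
    apply ENNReal.mul_ne_top ENNReal.ofReal_ne_top
    rw [ENNReal.inv_ne_top]
    intro h0
    rw [tsub_eq_zero_iff_le] at h0
    exact absurd h0 (not_le.mpr hrlt1)
  -- the key summation bound
  have hsum : ∀ f : ℝ → ℝ, Measurable f →
      E.ρ (fun t => ∑' k : ℕ,
        ENNReal.ofReal (b ^ (-(k:ℝ) * α)) * rearr f (b ^ (-(k:ℝ) - 1) * t))
        ≤ M * E.ρ (rearr f) := by
    intro f hf
    set N := E.ρ (rearr f) with hNdef
    refine (rho_tsum_le E _).trans ?_
    have hbd : ∀ k : ℕ, (ENNReal.ofReal E.C) ^ (k+1) *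
        E.ρ (fun t => ENNReal.ofReal (b ^ (-(k:ℝ) * α)) * rearr f (b ^ (-(k:ℝ) - 1) * t))
        ≤ (ENNReal.ofReal (E.C * c₀ * b ^ (1/p)) * (ENNReal.ofReal r) ^ k) * N := by
      intro k
      set a : ℝ := b ^ (-(k:ℝ) - 1) with hadef
      have ha0 : 0 < a := Real.rpow_pos_of_pos hb0 _
      have ha1 : a < 1 := by
        apply Real.rpow_lt_one_of_one_lt_of_neg hb
        have : (0:ℝ) ≤ (k:ℝ) := Nat.cast_nonneg k
        linarith
      have hK0 : (ENNReal.ofReal (c₀ * a ^ (-(1/p)))) ≠ 0 := by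
        simp only [ne_eq, ENNReal.ofReal_eq_zero, not_le]
        positivity
      have hdil := dil_bound E f hf ha0 hK0 (hbound a ha0 ha1)
      rw [rho_smul_ofReal E _ _]
      calc (ENNReal.ofReal E.C) ^ (k+1) *
            (ENNReal.ofReal (b ^ (-(k:ℝ) * α)) * E.ρ (fun t => rearr f (a * t)))
          ≤ (ENNReal.ofReal E.C) ^ (k+1) *
            (ENNReal.ofReal (b ^ (-(k:ℝ) * α)) * (ENNReal.ofReal (c₀ * a ^ (-(1/p))) * N)) := by
            gcongr
        _ = (ENNReal.ofReal (E.C ^ (k+1)) * ENNReal.ofReal (b ^ (-(k:ℝ) * α)) *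
              ENNReal.ofReal (c₀ * a ^ (-(1/p)))) * N := by
            rw [ENNReal.ofReal_pow hC0.le]
            ring
        _ = ENNReal.ofReal (E.C ^ (k+1) * (b ^ (-(k:ℝ) * α)) * (c₀ * a ^ (-(1/p)))) * N := by
            conv_rhs => rw [ENNReal.ofReal_mul
              (mul_nonneg (pow_nonneg hC0.le _) (Real.rpow_nonneg hb0.le _)),
              ENNReal.ofReal_mul (pow_nonneg hC0.le _)]
        _ = ENNReal.ofReal ((E.C * c₀ * b ^ (1/p)) * (E.C * b ^ (-δ)) ^ k) * N := by
            rw [hadef, scalar_eq hb0 hpα k]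
        _ = (ENNReal.ofReal (E.C * c₀ * b ^ (1/p)) * (ENNReal.ofReal r) ^ k) * N := by
            rw [ENNReal.ofReal_mul (by positivity), ENNReal.ofReal_pow hr0, hrdef]
    calc (∑' k : ℕ, (ENNReal.ofReal E.C) ^ (k+1) *
          E.ρ (fun t => ENNReal.ofReal (b ^ (-(k:ℝ) * α)) * rearr f (b ^ (-(k:ℝ) - 1) * t)))
        ≤ ∑' k : ℕ, (ENNReal.ofReal (E.C * c₀ * b ^ (1/p)) * (ENNReal.ofReal r) ^ k) * N :=
          ENNReal.tsum_le_tsum hbd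
      _ = ∑' k : ℕ, (ENNReal.ofReal (E.C * c₀ * b ^ (1/p)) * N) * (ENNReal.ofReal r) ^ k := by
          apply tsum_congr; intro k; ring
      _ = (ENNReal.ofReal (E.C * c₀ * b ^ (1/p)) * N) * ∑' k : ℕ, (ENNReal.ofReal r) ^ k :=
          ENNReal.tsum_mul_left
      _ = M * N := by
          rw [ENNReal.tsum_geometric, hMdef]
          ring
  by_cases hWtop : W = ⊤
  · subst hWtop
    refine ⟨(2:ℝ)⁻¹ ^ (1/U), M.toReal + 1, by positivity, ?_, ?_⟩
    · have := ENNReal.toReal_nonneg (a := M); linarith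
    intro f hf
    constructor
    · have hpt : ∀ᵐ t ∂(volume.restrict (Set.Ioi (0:ℝ))),
          (fun t => ENNReal.ofReal ((2:ℝ)⁻¹ ^ (1/U)) * rearr f t) t ≤ avgH U ⊤ f t := by
        filter_upwards [ae_restrict_mem measurableSet_Ioi] with t ht
        exact lower_top f hU ht
      have := E.mono (avgH U ⊤ f) _ hpt
      rwa [rho_smul_ofReal] at this
    · have hpt : ∀ᵐ t ∂(volume.restrict (Set.Ioi (0:ℝ))),
          avgH U ⊤ f t ≤ (fun t => ∑' k : ℕ,
            ENNReal.ofReal (b ^ (-(k:ℝ) * α)) * rearr f (b ^ (-(k:ℝ) - 1) * t)) t := by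
        filter_upwards [ae_restrict_mem measurableSet_Ioi] with t ht
        exact upper_top f hU hb hαU.le ht
      have h1 := E.mono _ (avgH U ⊤ f) hpt
      refine h1.trans ((hsum f hf).trans ?_)
      apply mul_le_mul_left
      have hMeq : M = ENNReal.ofReal M.toReal := (ENNReal.ofReal_toReal hMfin).symm
      exact le_trans (le_of_eq hMeq) (ENNReal.ofReal_le_ofReal (by linarith))
  · set w : ℝ := W.toReal with hwdef
    have hw : 0 < w := ENNReal.toReal_pos hW.ne' hWtop
    set K' : ℝ≥0∞ := (ENNReal.ofReal b *
      (1 - ENNReal.ofReal (b ^ (-(w * (1/U - α)))))⁻¹) ^ (1/w) with hK'def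
    have hK'fin : K' ≠ ⊤ := by
      apply ENNReal.rpow_ne_top_of_nonneg (by positivity)
      apply ENNReal.mul_ne_top ENNReal.ofReal_ne_top
      rw [ENNReal.inv_ne_top]
      intro h0
      rw [tsub_eq_zero_iff_le] at h0
      have : ENNReal.ofReal (b ^ (-(w * (1/U - α)))) < 1 := by
        rw [← ENNReal.ofReal_one]
        apply (ENNReal.ofReal_lt_ofReal_iff one_pos).mpr
        apply Real.rpow_lt_one_of_one_lt_of_neg hb
        have : 0 < w * (1/U - α) := mul_pos hw (by linarith)
        linarith
      exact absurd h0 (not_le.mpr this)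
    set Ctot : ℝ≥0∞ := ENNReal.ofReal K'.toReal * M with hCtotdef
    have hCtotfin : Ctot ≠ ⊤ := ENNReal.mul_ne_top ENNReal.ofReal_ne_top hMfin
    refine ⟨(2:ℝ)⁻¹ ^ (1/U) * (2:ℝ)⁻¹ ^ (1/w), Ctot.toReal + 1, by positivity, ?_, ?_⟩
    · have := ENNReal.toReal_nonneg (a := Ctot); linarith
    intro f hf
    constructor
    · have hpt : ∀ᵐ t ∂(volume.restrict (Set.Ioi (0:ℝ))),
          (fun t => ENNReal.ofReal ((2:ℝ)⁻¹ ^ (1/U) * (2:ℝ)⁻¹ ^ (1/w)) * rearr f t) t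
            ≤ avgH U W f t := by
        filter_upwards [ae_restrict_mem measurableSet_Ioi] with t ht
        exact lower_fin f hU hw hWtop hwdef.symm ht
      have := E.mono (avgH U W f) _ hpt
      rwa [rho_smul_ofReal] at this
    · have hpt : ∀ᵐ t ∂(volume.restrict (Set.Ioi (0:ℝ))),
          avgH U W f t ≤ (fun t => ENNReal.ofReal K'.toReal * ∑' k : ℕ,
            ENNReal.ofReal (b ^ (-(k:ℝ) * α)) * rearr f (b ^ (-(k:ℝ) - 1) * t)) t := by
        filter_upwards [ae_restrict_mem measurableSet_Ioi] with t ht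
        have h1 := upper_fin f hU hb hαU hw hWtop hwdef.symm ht
        rw [ENNReal.ofReal_toReal hK'fin]
        exact h1
      have h1 := E.mono _ (avgH U W f) hpt
      rw [rho_smul_ofReal] at h1
      refine h1.trans ?_
      calc ENNReal.ofReal K'.toReal * E.ρ (fun t => ∑' k : ℕ,
            ENNReal.ofReal (b ^ (-(k:ℝ) * α)) * rearr f (b ^ (-(k:ℝ) - 1) * t))
          ≤ ENNReal.ofReal K'.toReal * (M * E.ρ (rearr f)) :=
            mul_le_mul_right (hsum f hf) _
        _ = Ctot * E.ρ (rearr f) := by rw [hCtotdef]; ring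
        _ ≤ ENNReal.ofReal (Ctot.toReal + 1) * E.ρ (rearr f) := by
            apply mul_le_mul_left
            have hCeq : Ctot = ENNReal.ofReal Ctot.toReal :=
              (ENNReal.ofReal_toReal hCtotfin).symm
            exact le_trans (le_of_eq hCeq) (ENNReal.ofReal_le_ofReal (by linarith))
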